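/- Let k be a commutative ring, A an associative k-algebra, and μ : A × A → A a k-bilinear Hochschild 2-cocycle (a·μ(b,c) − μ(ab,c) + μ(a,bc) − μ(a,b)·c = 0 for all a,b,c). Define the trilinear map O(a,b,c) := μ(μ(a,b), c) − μ(a, μ(b,c)). Then O is a Hochschild 3-cocycle: a·O(b,c,d) − O(ab, c, d) + O(a, bc, d) − O(a, b, cd) + O(a,b,c)·d = 0 for all a, b, c, d ∈ A. -/
import Mathlib


/-- the primary obstruction `O(a,b,c) = μ(μ(a,b),c) − μ(a,μ(b,c))` associated
to a Hochschild 2-cocycle μ is a Hochschild 3-cocycle. -/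
theorem obstruction_is_three_cocycle {k A : Type*} [CommRing k] [Ring A] [Algebra k A]
    (μ : A →ₗ[k] A →ₗ[k] A)
    (hcocycle : ∀ a b c : A, a * μ b c - μ (a * b) c + μ a (b * c) - μ a b * c = 0)
    (O : A → A → A → A)
    (hO : ∀ a b c : A, O a b c = μ (μ a b) c - μ a (μ b c))
    (a b c d : A) :
    a * O b c d - O (a * b) c d + O a (b * c) d - O a b (c * d) + O a b c * d = 0 := by
  have H1 := hcocycle (μ a b) c d
  have H2 := hcocycle a (μ b c) d
  have H3 := hcocycle a b (μ c d)
  have H4 : μ (a * μ b c) d - μ (μ (a * b) c) d + μ (μ a (b * c)) d - μ (μ a b * c) d = 0 := by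
    have h : μ (a * μ b c - μ (a * b) c + μ a (b * c) - μ a b * c) d = 0 := by
      rw [hcocycle]; simp
    simpa [map_sub, map_add, LinearMap.sub_apply, LinearMap.add_apply] using h
  have H5 : μ a (b * μ c d) - μ a (μ (b * c) d) + μ a (μ b (c * d)) - μ a (μ b c * d) = 0 := by
    have h : μ a (b * μ c d - μ (b * c) d + μ b (c * d) - μ b c * d) = 0 := by
      rw [hcocycle]; simp
    simpa [map_sub, map_add] using h
  simp only [hO]
  linear_combination (norm := noncomm_ring) -H1 + H2 - H3 + H4 + H5
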